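/- Let k be a field of characteristic p > 0 and R(n,r) = k[x_1,...,x_n]/(x_1^{p^r},...,x_n^{p^r}). A choice of elements g_1,...,g_n in R(n,r)⊗A (for a commutative k-algebra A) defines an A-algebra automorphism g of R(n,r)⊗A with g(x_i)=g_i if and only if g_i(0)^{p^r}=0 for all i and the Jacobian matrix J_g = (∂g_j/∂x_i(0))_{ij} is invertible in M_n(A). -/

import Mathlib

set_option maxHeartbeats 2000000
set_option synthInstance.maxHeartbeats 1000000

open MvPolynomial

/-- `R(n,r) ⊗_k A` modeled as `A[x_1,...,x_n]/(x_i^{p^r})` (with `q = p^r`). -/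
abbrev Rq (A : Type) [CommRing A] (n q : ℕ) : Type :=
  MvPolynomial (Fin n) A ⧸
    Ideal.span (Set.range fun i : Fin n => (X i : MvPolynomial (Fin n) A) ^ q)

namespace Stmt0Aux

variable {A : Type} [CommRing A] {n q : ℕ}

noncomputable abbrev II (A : Type) [CommRing A] (n q : ℕ) : Ideal (MvPolynomial (Fin n) A) :=
  Ideal.span (Set.range fun i : Fin n => (X i : MvPolynomial (Fin n) A) ^ q)

lemma single_add_tsub {α : Fin n →₀ ℕ} {i : Fin n} {m : ℕ} (hi : m ≤ α i) :
    Finsupp.single i m + (α - Finsupp.single i m) = α := by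
  ext j
  simp only [Finsupp.add_apply, Finsupp.tsub_apply, Finsupp.single_apply]
  split_ifs with h
  · subst h; omega
  · omega

lemma eval_pderiv_eq_coeff_single (l : Fin n) (F : MvPolynomial (Fin n) A) :
    eval (0 : Fin n → A) (pderiv l F) = coeff (Finsupp.single l 1) F := by
  induction F using MvPolynomial.induction_on' with
  | add f g hf hg => rw [map_add, map_add, hf, hg, coeff_add]
  | monomial s a =>
      classical
      rw [pderiv_monomial, eval_zero, constantCoeff_monomial, coeff_monomial]
      by_cases h : s = Finsupp.single l 1
      · subst h; simp
      · rw [if_neg h]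
        by_cases h0 : s - Finsupp.single l 1 = 0
        · rw [if_pos h0]
          have hle : ∀ j, s j ≤ (Finsupp.single l 1) j := fun j => by
            have h0j := DFunLike.congr_fun h0 j
            rw [Finsupp.tsub_apply, Finsupp.coe_zero, Pi.zero_apply] at h0j
            omega
          have hsl : s l = 0 := by
            by_contra hsl
            apply h
            ext j
            have hj := hle j
            rcases eq_or_ne j l with rfl | hne
            · simp only [Finsupp.single_eq_same] at hj ⊢; omega
            · have : (Finsupp.single l 1) j = 0 := Finsupp.single_eq_of_ne' (Ne.symm hne)
              rw [this]; omega
          rw [hsl, Nat.cast_zero, mul_zero]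
        · rw [if_neg h0]

/-- The span of (images of) monomials of degree at least `k`. -/
noncomputable def DD (A : Type) [CommRing A] (n q : ℕ) (k : ℕ) : Submodule A (Rq A n q) :=
  Submodule.span A ((fun α : Fin n →₀ ℕ => Ideal.Quotient.mk (II A n q) (monomial α 1)) ''
    {α | k ≤ ∑ j, α j})

lemma mk_monomial_smul (v : Fin n →₀ ℕ) (c : A) :
    Ideal.Quotient.mk (II A n q) (monomial v c)
      = c • Ideal.Quotient.mk (II A n q) (monomial v 1) := by
  rw [← Ideal.Quotient.mkₐ_eq_mk A (II A n q), ← map_smul, smul_monomial,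
    smul_eq_mul, mul_one]

lemma mk_mem_DD {k : ℕ} {F : MvPolynomial (Fin n) A}
    (h : ∀ α : Fin n →₀ ℕ, (∑ j, α j) < k → coeff α F = 0) :
    Ideal.Quotient.mk (II A n q) F ∈ DD A n q k := by
  nth_rewrite 1 [as_sum F]
  rw [map_sum]
  refine Submodule.sum_mem _ fun v hv => ?_
  have hv' : k ≤ ∑ j, v j := by
    by_contra hlt; push_neg at hlt
    exact (mem_support_iff.mp hv) (h v hlt)
  rw [mk_monomial_smul]
  exact Submodule.smul_mem _ _ (Submodule.subset_span ⟨v, hv', rfl⟩)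

lemma DD_anti {k k' : ℕ} (h : k ≤ k') : DD A n q k' ≤ DD A n q k :=
  Submodule.span_mono (Set.image_mono fun α hα => le_trans h hα)

lemma DD_mul_le {a b : ℕ} : DD A n q a * DD A n q b ≤ DD A n q (a + b) := by
  rw [DD, DD, Submodule.span_mul_span]
  rw [Submodule.span_le]
  rintro x hx
  rw [Set.mem_mul] at hx
  obtain ⟨u, ⟨α, hα, rfl⟩, v, ⟨β, hβ, rfl⟩, rfl⟩ := hx
  have : Ideal.Quotient.mk (II A n q) (monomial α (1:A))
        * Ideal.Quotient.mk (II A n q) (monomial β (1:A))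
      = Ideal.Quotient.mk (II A n q) (monomial (α + β) (1:A)) := by
    rw [← map_mul, monomial_mul, one_mul]
  rw [this]
  refine Submodule.subset_span ⟨α + β, ?_, rfl⟩
  have : (∑ j, (α + β) j) = (∑ j, α j) + (∑ j, β j) := by
    simp [Finsupp.add_apply, Finset.sum_add_distrib]
  simp only [Set.mem_setOf_eq, this]
  exact Nat.add_le_add hα hβ

lemma mul_mem_DD {a b : ℕ} {u v : Rq A n q} (hu : u ∈ DD A n q a) (hv : v ∈ DD A n q b) :
    u * v ∈ DD A n q (a + b) :=
  DD_mul_le (Submodule.mul_mem_mul hu hv)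

lemma mem_DD_zero (z : Rq A n q) : z ∈ DD A n q 0 := by
  obtain ⟨F, rfl⟩ := Ideal.Quotient.mk_surjective z
  exact mk_mem_DD fun α h => absurd h (by omega)

lemma monomial_mem_II {α : Fin n →₀ ℕ} {i : Fin n} (hi : q ≤ α i) (c : A) :
    monomial α c ∈ II A n q := by
  have hkey : (monomial α c : MvPolynomial (Fin n) A)
      = X i ^ q * monomial (α - Finsupp.single i q) c := by
    rw [X_pow_eq_monomial, monomial_mul, one_mul, single_add_tsub hi]
  rw [hkey]
  exact Ideal.mul_mem_right _ _ (Ideal.subset_span ⟨i, rfl⟩)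

lemma DD_le_bot (hq : 1 ≤ q) : DD A n q (n * (q - 1) + 1) ≤ ⊥ := by
  rw [DD, Submodule.span_le]
  rintro _ ⟨α, hα, rfl⟩
  obtain ⟨i, hi⟩ : ∃ i, q ≤ α i := by
    by_contra h; push_neg at h
    have hle : (∑ j, α j) ≤ ∑ _j : Fin n, (q - 1) :=
      Finset.sum_le_sum fun j _ => by have := h j; omega
    rw [Finset.sum_const, Finset.card_univ, Fintype.card_fin, smul_eq_mul] at hle
    simp only [Set.mem_setOf_eq] at hα
    omega
  simp only [SetLike.mem_coe, Submodule.mem_bot]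
  exact Ideal.Quotient.eq_zero_iff_mem.mpr (monomial_mem_II hi 1)

lemma monomial_mem_span_X {α : Fin n →₀ ℕ} (hα : α ≠ 0) (c : A) :
    monomial α c ∈ Ideal.span (Set.range (X : Fin n → MvPolynomial (Fin n) A)) := by
  obtain ⟨i, hi⟩ : ∃ i, α i ≠ 0 := by
    by_contra h; push_neg at h; exact hα (Finsupp.ext fun i => h i)
  have hkey : monomial α c
      = X i * monomial (α - Finsupp.single i 1) c := by
    rw [X, monomial_mul, one_mul, single_add_tsub (by omega : 1 ≤ α i)]
  rw [hkey]
  exact Ideal.mul_mem_right _ _ (Ideal.subset_span ⟨i, rfl⟩)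

lemma mem_span_X_of_coeff_zero {F : MvPolynomial (Fin n) A} (h : coeff 0 F = 0) :
    F ∈ Ideal.span (Set.range (X : Fin n → MvPolynomial (Fin n) A)) := by
  nth_rewrite 1 [as_sum F]
  refine Submodule.sum_mem _ fun v hv => monomial_mem_span_X (fun h0 => ?_) _
  rw [mem_support_iff, h0] at hv; exact hv h

lemma eval_zero_of_mem (hq : 1 ≤ q) {F : MvPolynomial (Fin n) A} (hF : F ∈ II A n q) :
    eval (0 : Fin n → A) F = 0 := by
  refine Submodule.span_induction ?_ ?_ ?_ ?_ hF
  · rintro _ ⟨i, rfl⟩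
    rw [map_pow, eval_X, Pi.zero_apply, zero_pow (by omega : q ≠ 0)]
  · exact map_zero _
  · intro x y _ _ hx hy; rw [map_add, hx, hy, add_zero]
  · intro r x _ hx; rw [smul_eq_mul, map_mul, hx, mul_zero]

lemma eval_pderiv_zero_of_mem (hq : 2 ≤ q) (i : Fin n) {F : MvPolynomial (Fin n) A}
    (hF : F ∈ II A n q) : eval (0 : Fin n → A) (pderiv i F) = 0 := by
  have main : eval (0 : Fin n → A) F = 0 ∧ eval (0 : Fin n → A) (pderiv i F) = 0 := by
    refine Submodule.span_induction ?_ ?_ ?_ ?_ hF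
    · rintro _ ⟨l, rfl⟩
      constructor
      · rw [map_pow, eval_X, Pi.zero_apply, zero_pow (by omega : q ≠ 0)]
      · rw [pderiv_pow, map_mul, map_mul, map_pow, eval_X, Pi.zero_apply,
          zero_pow (by omega : q - 1 ≠ 0), mul_zero, zero_mul]
    · constructor <;> simp
    · intro x y _ _ hx hy
      exact ⟨by rw [map_add, hx.1, hy.1, add_zero],
        by rw [map_add, map_add, hx.2, hy.2, add_zero]⟩
    · intro r x _ hx
      refine ⟨by rw [smul_eq_mul, map_mul, hx.1, mul_zero], ?_⟩
      rw [smul_eq_mul, pderiv_mul, map_add, map_mul, map_mul, hx.1, hx.2]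
      ring
  exact main.2

lemma eval_zero_aeval (G : Fin n → MvPolynomial (Fin n) A) (F : MvPolynomial (Fin n) A) :
    eval (0 : Fin n → A) (aeval G F)
      = eval (fun l => eval (0 : Fin n → A) (G l)) F := by
  induction F using MvPolynomial.induction_on with
  | C a => simp only [aeval_C]; simp
  | add f g hf hg => simp only [map_add, hf, hg]
  | mul_X f j hf => simp only [map_mul, aeval_X, hf, eval_X]

lemma chain_rule (G : Fin n → MvPolynomial (Fin n) A) (i : Fin n)
    (H : MvPolynomial (Fin n) A) :
    eval (0 : Fin n → A) (pderiv i (aeval G H)) =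
      ∑ l, eval (fun l' => eval (0 : Fin n → A) (G l')) (pderiv l H)
            * eval (0 : Fin n → A) (pderiv i (G l)) := by
  induction H using MvPolynomial.induction_on with
  | C a => simp
  | add f g hf hg =>
      simp only [map_add, hf, hg, ← Finset.sum_add_distrib, add_mul]
  | mul_X f j hf =>
      classical
      simp only [map_mul, aeval_X, pderiv_mul, pderiv_X, map_add, map_mul, hf,
        eval_zero_aeval, eval_X, Pi.single_apply, apply_ite (eval (fun l' => eval (0:Fin n → A) (G l'))),
        map_one, map_zero, mul_ite, mul_one, mul_zero, ite_mul, one_mul, zero_mul, add_mul,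
        Finset.sum_add_distrib, Finset.sum_mul]
      rw [Finset.sum_ite_eq Finset.univ j (fun x => eval (fun l' => eval (0:Fin n → A) (G l')) f * eval (0:Fin n → A) (pderiv i (G x)))]
      simp only [Finset.mem_univ, if_pos]
      congr 1
      exact Finset.sum_congr rfl fun l _ => by ring
  done


lemma degree_single_sum (i : Fin n) : (∑ j, Finsupp.single i (1:ℕ) j) = 1 := by
  classical
  simp [Finsupp.single_apply]

lemma top_le_range (hq : 1 ≤ q) (S : Subalgebra A (Rq A n q))
    (y e : Fin n → Rq A n q)
    (hyS : ∀ i, y i ∈ S) (hy1 : ∀ i, y i ∈ DD A n q 1) (he2 : ∀ i, e i ∈ DD A n q 2)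
    (hxy : ∀ i, Ideal.Quotient.mk (II A n q) (X i) = y i + e i) (z : Rq A n q) : z ∈ S := by
  have claim1 : ∀ d : ℕ, ∀ α : Fin n →₀ ℕ, (∑ j, α j) = d →
      Ideal.Quotient.mk (II A n q) (monomial α (1:A)) ∈
        Subalgebra.toSubmodule S ⊔ DD A n q (d+1) := by
    intro d
    induction d with
    | zero =>
        intro α hα
        have hα0 : α = 0 := by
          ext j
          have hle : α j ≤ ∑ j', α j' :=
            Finset.single_le_sum (fun _ _ => Nat.zero_le _) (Finset.mem_univ j)
          simp only [Finsupp.coe_zero, Pi.zero_apply]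
          omega
        subst hα0
        rw [monomial_zero', C_1, map_one]
        exact Submodule.mem_sup_left (S.one_mem)
    | succ d ih =>
        intro α hα
        obtain ⟨i, hi⟩ : ∃ i, α i ≠ 0 := by
          by_contra h; push_neg at h
          rw [Finset.sum_eq_zero fun j _ => h j] at hα
          omega
        set β := α - Finsupp.single i 1 with hβdef
        have hαβ : α = Finsupp.single i 1 + β := (single_add_tsub (by omega)).symm
        have hβsum : (∑ j, β j) = d := by
          have h2 : (∑ j, α j) = (∑ j, Finsupp.single i (1:ℕ) j) + ∑ j, β j := by
            nth_rewrite 1 [hαβ]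
            rw [← Finset.sum_add_distrib]
            exact Finset.sum_congr rfl fun j _ => Finsupp.add_apply _ _ _
          rw [degree_single_sum] at h2
          omega
        have hmono : Ideal.Quotient.mk (II A n q) (monomial α (1:A))
            = Ideal.Quotient.mk (II A n q) (X i)
              * Ideal.Quotient.mk (II A n q) (monomial β (1:A)) := by
          rw [← map_mul, X, monomial_mul, one_mul, ← hαβ]
        have hβD : Ideal.Quotient.mk (II A n q) (monomial β (1:A)) ∈ DD A n q d :=
          Submodule.subset_span ⟨β, by simp [hβsum], rfl⟩
        obtain ⟨s, hs, w, hw, hsw⟩ := Submodule.mem_sup.mp (ih β hβsum)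
        rw [hmono, hxy i, ← hsw]
        have expand : (y i + e i) * (s + w) = y i * s + (y i * w + e i * (s + w)) := by ring
        rw [expand]
        refine Submodule.add_mem _
          (Submodule.mem_sup_left (S.mul_mem (hyS i) hs)) (Submodule.mem_sup_right ?_)
        have h1 : y i * w ∈ DD A n q (1 + (d+1)) := mul_mem_DD (hy1 i) hw
        have h2 : e i * (s + w) ∈ DD A n q (2 + d) := by
          rw [hsw]
          exact mul_mem_DD (he2 i) hβD
        refine Submodule.add_mem _ (DD_anti (A:=A) (n:=n) (q:=q) (by omega) h1)
          (DD_anti (A:=A) (n:=n) (q:=q) (by omega) h2)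
  have claim1' : ∀ k : ℕ, DD A n q k ≤ Subalgebra.toSubmodule S ⊔ DD A n q (k+1) := by
    intro k
    rw [DD, Submodule.span_le]
    rintro _ ⟨α, hα, rfl⟩
    have hmem := claim1 (∑ j, α j) α rfl
    exact SetLike.le_def.mp (sup_le_sup_left (DD_anti (by
      simp only [Set.mem_setOf_eq] at hα; omega)) _) hmem
  have hdesc : ∀ j : ℕ, DD A n q ((n*(q-1)+1) - j) ≤ Subalgebra.toSubmodule S := by
    intro j
    induction j with
    | zero =>
        rw [Nat.sub_zero]
        exact (DD_le_bot hq).trans bot_le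
    | succ j ih =>
        refine (claim1' _).trans (sup_le le_rfl ?_)
        exact (DD_anti (by omega : (n*(q-1)+1) - j ≤ (n*(q-1)+1) - (j+1) + 1)).trans ih
  have hfin := hdesc (n*(q-1)+1)
  rw [Nat.sub_self] at hfin
  exact hfin (mem_DD_zero z)

lemma moduleFinite (hq : 1 ≤ q) : Module.Finite A (Rq A n q) := by
  classical
  set v : (Fin n → Fin q) → Rq A n q := fun f =>
    Ideal.Quotient.mk (II A n q)
      (monomial (Finsupp.equivFunOnFinite.symm fun i => ((f i : ℕ))) (1:A)) with hv
  have hspan : Submodule.span A (Set.range v) = ⊤ := by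
    rw [eq_top_iff]
    intro z _
    obtain ⟨F, rfl⟩ := Ideal.Quotient.mk_surjective z
    nth_rewrite 1 [as_sum F]
    rw [map_sum]
    refine Submodule.sum_mem _ fun α _ => ?_
    rw [mk_monomial_smul]
    refine Submodule.smul_mem _ _ ?_
    by_cases hb : ∀ i, α i < q
    · have hα : (Finsupp.equivFunOnFinite.symm fun i => (((⟨α i, hb i⟩ : Fin q) : ℕ))) = α := by
        ext j; simp
      refine Submodule.subset_span ⟨fun i => ⟨α i, hb i⟩, ?_⟩
      show Ideal.Quotient.mk (II A n q)
        (monomial (Finsupp.equivFunOnFinite.symm fun i => (((⟨α i, hb i⟩ : Fin q) : ℕ))) (1:A)) = _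
      rw [hα]
    · push_neg at hb
      obtain ⟨i, hi⟩ := hb
      rw [Ideal.Quotient.eq_zero_iff_mem.mpr (monomial_mem_II hi 1)]
      exact Submodule.zero_mem _
  exact ⟨⟨(Set.finite_range v).toFinset, by rw [Set.Finite.coe_toFinset]; exact hspan⟩⟩

lemma finsupp_eq_zero_of_sum {α : Fin n →₀ ℕ} (h : (∑ j, α j) = 0) : α = 0 := by
  ext j
  have hle : α j ≤ ∑ j', α j' :=
    Finset.single_le_sum (fun _ _ => Nat.zero_le _) (Finset.mem_univ j)
  simp only [Finsupp.coe_zero, Pi.zero_apply]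
  omega

lemma degree_lt_two {α : Fin n →₀ ℕ} (h : (∑ j, α j) < 2) :
    α = 0 ∨ ∃ l, α = Finsupp.single l 1 := by
  classical
  rcases (by omega : (∑ j, α j) = 0 ∨ (∑ j, α j) = 1) with h0 | h1
  · exact Or.inl (finsupp_eq_zero_of_sum h0)
  · obtain ⟨l, hl⟩ : ∃ l, α l ≠ 0 := by
      by_contra hc; push_neg at hc
      rw [Finset.sum_eq_zero fun j _ => hc j] at h1; omega
    refine Or.inr ⟨l, ?_⟩
    ext j
    rcases eq_or_ne j l with rfl | hne
    · rw [Finsupp.single_eq_same]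
      have hle : α j ≤ ∑ j', α j' :=
        Finset.single_le_sum (fun _ _ => Nat.zero_le _) (Finset.mem_univ j)
      omega
    · rw [Finsupp.single_eq_of_ne' (Ne.symm hne)]
      have hsub : ({l, j} : Finset (Fin n)) ⊆ Finset.univ := Finset.subset_univ _
      have hle : α l + α j ≤ ∑ j', α j' := by
        rw [← Finset.sum_pair (Ne.symm hne)]
        exact Finset.sum_le_sum_of_subset hsub
      omega

/-- The endomorphism of `Rq` induced by substituting `G`. -/
noncomputable def phiEnd (G : Fin n → MvPolynomial (Fin n) A)
    (hG : ∀ i, (Ideal.Quotient.mk (II A n q) (G i)) ^ q = 0) :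
    Rq A n q →ₐ[A] Rq A n q :=
  Ideal.Quotient.liftₐ (II A n q)
    (aeval (fun i => Ideal.Quotient.mk (II A n q) (G i)))
    (by
      intro a ha
      refine Submodule.span_induction ?_ ?_ ?_ ?_ ha
      · rintro _ ⟨i, rfl⟩; rw [map_pow, aeval_X]; exact hG i
      · exact map_zero _
      · intro x y _ _ hx hy; rw [map_add, hx, hy, add_zero]
      · intro r x _ hx; rw [smul_eq_mul, map_mul, hx, mul_zero])

lemma phiEnd_mk (G : Fin n → MvPolynomial (Fin n) A)
    (hG : ∀ i, (Ideal.Quotient.mk (II A n q) (G i)) ^ q = 0)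
    (F : MvPolynomial (Fin n) A) :
    phiEnd G hG (Ideal.Quotient.mk (II A n q) F)
      = aeval (fun i => Ideal.Quotient.mk (II A n q) (G i)) F := by
  rw [phiEnd, Ideal.Quotient.liftₐ_apply]
  rfl

end Stmt0Aux

open Stmt0Aux in
/-- A choice of elements `g_1,...,g_n` (given by representatives `G i`) in
`R(n,r)_A` defines an `A`-algebra automorphism `g` of `R(n,r)_A` with `g(x_i) = g_i`
if and only if `g_i(0)^{p^r} = 0` for all `i` and the Jacobian matrix
`J_g = (∂g_j/∂x_i(0))_{ij}` is invertible over `A`. -/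
theorem stmt_0 (k : Type) [Field k] (p : ℕ) [Fact p.Prime] [CharP k p]
    (n r : ℕ) (hn : 1 ≤ n) (hr : 1 ≤ r)
    (A : Type) [CommRing A] [Algebra k A]
    (G : Fin n → MvPolynomial (Fin n) A) :
    (∃ φ : Rq A n (p ^ r) ≃ₐ[A] Rq A n (p ^ r),
        ∀ i, φ (Ideal.Quotient.mk _ (X i)) = Ideal.Quotient.mk _ (G i)) ↔
      ((∀ i, (eval (0 : Fin n → A) (G i)) ^ p ^ r = 0) ∧
        IsUnit (Matrix.of fun i j : Fin n => eval (0 : Fin n → A) (pderiv i (G j)))) := by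
  classical
  have hp : p.Prime := Fact.out
  have hq2 : 2 ≤ p ^ r := le_trans hp.two_le (Nat.le_self_pow (by omega) p)
  rcases subsingleton_or_nontrivial A with hA | hA
  · haveI : Subsingleton (MvPolynomial (Fin n) A) :=
      ⟨fun f g => MvPolynomial.ext f g fun m => Subsingleton.elim _ _⟩
    haveI : Subsingleton (Rq A n (p ^ r)) :=
      ⟨fun a b => by
        obtain ⟨x, rfl⟩ := Ideal.Quotient.mk_surjective a
        obtain ⟨y, rfl⟩ := Ideal.Quotient.mk_surjective b
        rw [Subsingleton.elim x y]⟩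
    haveI : Subsingleton (Matrix (Fin n) (Fin n) A) :=
      ⟨fun a b => by ext i j; exact Subsingleton.elim _ _⟩
    have h1 : ∃ φ : Rq A n (p ^ r) ≃ₐ[A] Rq A n (p ^ r),
        ∀ i, φ (Ideal.Quotient.mk _ (X i)) = Ideal.Quotient.mk _ (G i) :=
      ⟨AlgEquiv.refl, fun i => Subsingleton.elim _ _⟩
    have h2 : IsUnit (Matrix.of fun i j : Fin n => eval (0 : Fin n → A) (pderiv i (G j))) :=
      isUnit_of_subsingleton _
    exact iff_of_true h1 ⟨fun i => Subsingleton.elim _ _, h2⟩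
  · haveI : CharP A p := charP_of_injective_algebraMap' k p
    constructor
    · rintro ⟨φ, hφ⟩
      have hGq : ∀ i, G i ^ p ^ r ∈ II A n (p ^ r) := by
        intro i
        have hx0 : Ideal.Quotient.mk (II A n (p ^ r)) (X i ^ p ^ r) = 0 :=
          Ideal.Quotient.eq_zero_iff_mem.mpr
            (Ideal.subset_span ⟨i, rfl⟩)
        rw [← Ideal.Quotient.eq_zero_iff_mem, map_pow, ← hφ i, ← map_pow, ← map_pow, hx0,
          map_zero]
      refine ⟨fun i => ?_, ?_⟩
      · have h := eval_zero_of_mem (by omega) (hGq i)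
        rwa [map_pow] at h
      · have hcomp : ∀ F, φ (Ideal.Quotient.mk (II A n (p ^ r)) F)
            = Ideal.Quotient.mk (II A n (p ^ r)) (aeval G F) := by
          intro F
          have h : (φ.toAlgHom.comp (Ideal.Quotient.mkₐ A (II A n (p ^ r))))
              = (Ideal.Quotient.mkₐ A (II A n (p ^ r))).comp (aeval G) := by
            apply MvPolynomial.algHom_ext
            intro i
            simp only [AlgHom.comp_apply, Ideal.Quotient.mkₐ_eq_mk, aeval_X,
              AlgEquiv.toAlgHom_eq_coe, AlgHom.coe_coe]
            exact hφ i
          exact DFunLike.congr_fun h F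
        have hkey : ∀ j : Fin n, ∃ H : MvPolynomial (Fin n) A,
            X j - aeval G H ∈ II A n (p ^ r) := by
          intro j
          obtain ⟨H, hH⟩ := Ideal.Quotient.mk_surjective
            (φ.symm (Ideal.Quotient.mk (II A n (p ^ r)) (X j)))
          refine ⟨H, Ideal.Quotient.eq.mp ?_⟩
          rw [← hcomp H, hH, AlgEquiv.apply_symm_apply]
        choose H hH using hkey
        refine (Matrix.isUnit_iff_isUnit_det _).mpr <| Matrix.isUnit_det_of_right_inverse
          (B := Matrix.of fun l j : Fin n =>
            eval (fun l' => eval (0 : Fin n → A) (G l')) (pderiv l (H j))) ?_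
        ext i j
        have h0 : eval (0 : Fin n → A) (pderiv i (X j - aeval G (H j))) = 0 :=
          eval_pderiv_zero_of_mem hq2 i (hH j)
        rw [map_sub, map_sub, sub_eq_zero, chain_rule] at h0
        have hX : eval (0 : Fin n → A) (pderiv i (X j : MvPolynomial (Fin n) A))
            = if i = j then 1 else 0 := by
          rcases eq_or_ne i j with rfl | hne
          · simp
          · rw [pderiv_X, Pi.single_apply, if_neg (Ne.symm hne), map_zero, if_neg hne]
        rw [hX] at h0
        rw [Matrix.mul_apply, Matrix.one_apply, h0]
        exact Finset.sum_congr rfl fun l _ => by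
          simp only [Matrix.of_apply]; ring
    · rintro ⟨hc0, hM⟩
      have hItop : II A n (p ^ r) ≠ ⊤ := by
        intro htop
        have h1 : (1 : MvPolynomial (Fin n) A) ∈ II A n (p ^ r) := htop ▸ Submodule.mem_top
        have h2 := eval_zero_of_mem (by omega) h1
        rw [map_one] at h2
        exact one_ne_zero h2
      haveI : Nontrivial (Rq A n (p ^ r)) := Ideal.Quotient.nontrivial_iff.mpr hItop
      haveI : CharP (Rq A n (p ^ r)) p := charP_of_injective_algebraMap' k p
      have hcz : ∀ F : MvPolynomial (Fin n) A, coeff 0 F = eval (0 : Fin n → A) F :=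
        fun F => by rw [eval_zero, constantCoeff_eq]
      -- nilpotency of the images of the `G i`
      have hGnil : ∀ i, (Ideal.Quotient.mk (II A n (p ^ r)) (G i)) ^ p ^ r = 0 := by
        intro i
        have hH0 : coeff 0 (G i - C (eval (0 : Fin n → A) (G i))) = 0 := by
          rw [coeff_sub, hcz, hcz, eval_C, sub_self]
        have hmem := mem_span_X_of_coeff_zero hH0
        have hmk : Ideal.Quotient.mk (II A n (p ^ r)) (G i - C (eval (0 : Fin n → A) (G i)))
            ∈ Ideal.span (Set.range fun j : Fin n =>
                Ideal.Quotient.mk (II A n (p ^ r)) (X j)) := by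
          have h3 := Ideal.mem_map_of_mem (Ideal.Quotient.mk (II A n (p ^ r))) hmem
          rwa [Ideal.map_span, ← Set.range_comp] at h3
        rw [Ideal.mem_span_range_iff_exists_fun] at hmk
        obtain ⟨u, hu⟩ := hmk
        have hsplit : Ideal.Quotient.mk (II A n (p ^ r)) (G i)
            = Ideal.Quotient.mk (II A n (p ^ r)) (C (eval (0 : Fin n → A) (G i)))
              + Ideal.Quotient.mk (II A n (p ^ r)) (G i - C (eval (0 : Fin n → A) (G i))) := by
          rw [← map_add]; congr 1; ring
        rw [hsplit, add_pow_char_pow, ← hu, sum_pow_char_pow]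
        have hC : (Ideal.Quotient.mk (II A n (p ^ r))
            (C (eval (0 : Fin n → A) (G i)))) ^ p ^ r = 0 := by
          rw [← map_pow, ← C_pow, hc0 i, C_0, map_zero]
        rw [hC, zero_add]
        refine Finset.sum_eq_zero fun j _ => ?_
        have hxq : (Ideal.Quotient.mk (II A n (p ^ r)) (X j)) ^ p ^ r = 0 := by
          rw [← map_pow]
          exact Ideal.Quotient.eq_zero_iff_mem.mpr (Ideal.subset_span ⟨j, rfl⟩)
        rw [mul_pow, hxq, mul_zero]
      -- the induced endomorphism
      set Φ : Rq A n (p ^ r) →ₐ[A] Rq A n (p ^ r) := phiEnd G hGnil with hΦ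
      have hΦX : ∀ i, Φ (Ideal.Quotient.mk (II A n (p ^ r)) (X i))
          = Ideal.Quotient.mk (II A n (p ^ r)) (G i) := by
        intro i
        rw [hΦ, phiEnd_mk, aeval_X]
      -- matrix computations
      obtain ⟨u, hu⟩ := hM
      have hMul : (Matrix.of fun i j : Fin n => eval (0 : Fin n → A) (pderiv i (G j)))
          * (↑u⁻¹ : Matrix (Fin n) (Fin n) A) = 1 := by
        rw [← hu]; exact u.mul_inv
      -- the linear approximations
      set Y : Fin n → MvPolynomial (Fin n) A := fun i =>
        ∑ j, ((↑u⁻¹ : Matrix (Fin n) (Fin n) A) j i) •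
          (G j - C (eval (0 : Fin n → A) (G j))) with hY
      have hYc0 : ∀ i, coeff 0 (Y i) = 0 := by
        intro i
        rw [hY, coeff_sum]
        refine Finset.sum_eq_zero fun j _ => ?_
        rw [coeff_smul, coeff_sub, hcz, hcz, eval_C, sub_self, smul_zero]
      have hYc1 : ∀ i l, coeff (Finsupp.single l 1) (Y i) = if l = i then 1 else 0 := by
        intro i l
        have h4 := congrFun (congrFun hMul l) i
        rw [Matrix.mul_apply] at h4
        rw [hY, coeff_sum]
        calc (∑ j, coeff (Finsupp.single l 1)
                (((↑u⁻¹ : Matrix (Fin n) (Fin n) A) j i) •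
                  (G j - C (eval (0 : Fin n → A) (G j)))))
            = ∑ j, (Matrix.of fun i' j' : Fin n => eval (0 : Fin n → A) (pderiv i' (G j'))) l j
                * (↑u⁻¹ : Matrix (Fin n) (Fin n) A) j i := by
              refine Finset.sum_congr rfl fun j _ => ?_
              rw [coeff_smul, coeff_sub, smul_eq_mul]
              have h5 : coeff (Finsupp.single l 1) (C (eval (0 : Fin n → A) (G j)) :
                  MvPolynomial (Fin n) A) = 0 := by
                rw [coeff_C, if_neg]
                exact fun h => one_ne_zero (Finsupp.single_eq_zero.mp h.symm)
              rw [h5, sub_zero, ← eval_pderiv_eq_coeff_single, Matrix.of_apply, mul_comm]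
          _ = if l = i then 1 else 0 := by rw [← Matrix.mul_apply, hMul, Matrix.one_apply]
      have hF'low : ∀ i, ∀ α : Fin n →₀ ℕ, (∑ j, α j) < 2 → coeff α (X i - Y i) = 0 := by
        intro i α hα
        rcases degree_lt_two hα with rfl | ⟨l, rfl⟩
        · rw [coeff_sub, hYc0, coeff_zero_X, sub_self]
        · rw [coeff_sub, hYc1, coeff_X']
          rcases eq_or_ne i l with rfl | hne
          · rw [if_pos rfl, if_pos rfl, sub_self]
          · rw [if_neg (fun h => hne ((Finsupp.single_left_inj one_ne_zero).mp h)),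
              if_neg (Ne.symm hne), sub_self]
      -- membership facts
      have hyS : ∀ i, Ideal.Quotient.mk (II A n (p ^ r)) (Y i) ∈ Φ.range := by
        intro i
        rw [hY, map_sum]
        refine Subalgebra.sum_mem _ fun j _ => ?_
        rw [← Ideal.Quotient.mkₐ_eq_mk A (II A n (p ^ r)), map_smul, map_sub,
          Ideal.Quotient.mkₐ_eq_mk]
        refine Subalgebra.smul_mem _ (Subalgebra.sub_mem _ ?_ ?_) _
        · exact ⟨Ideal.Quotient.mk (II A n (p ^ r)) (X j), hΦX j⟩
        · have h6 : Ideal.Quotient.mk (II A n (p ^ r)) (C (eval (0 : Fin n → A) (G j)))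
              = algebraMap A (Rq A n (p ^ r)) (eval (0 : Fin n → A) (G j)) := rfl
          rw [h6]
          exact Subalgebra.algebraMap_mem _ _
      have hy1 : ∀ i, Ideal.Quotient.mk (II A n (p ^ r)) (Y i) ∈ DD A n (p ^ r) 1 := by
        intro i
        refine mk_mem_DD fun α hα => ?_
        have hα0 : α = 0 := finsupp_eq_zero_of_sum (by omega)
        subst hα0
        exact hYc0 i
      have he2 : ∀ i, Ideal.Quotient.mk (II A n (p ^ r)) (X i - Y i) ∈ DD A n (p ^ r) 2 :=
        fun i => mk_mem_DD (hF'low i)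
      have hxy : ∀ i, Ideal.Quotient.mk (II A n (p ^ r)) (X i)
          = Ideal.Quotient.mk (II A n (p ^ r)) (Y i)
            + Ideal.Quotient.mk (II A n (p ^ r)) (X i - Y i) := by
        intro i; rw [← map_add]; congr 1; ring
      have hsurj : Function.Surjective Φ := by
        intro z
        exact top_le_range (by omega) Φ.range (fun i => Ideal.Quotient.mk _ (Y i))
          (fun i => Ideal.Quotient.mk _ (X i - Y i)) hyS hy1 he2 hxy z
      haveI : Module.Finite A (Rq A n (p ^ r)) := moduleFinite (by omega)
      have hinj : Function.Injective Φ :=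
        OrzechProperty.injective_of_surjective_endomorphism Φ.toLinearMap hsurj
      refine ⟨AlgEquiv.ofBijective Φ ⟨hinj, hsurj⟩, fun i => ?_⟩
      show Φ (Ideal.Quotient.mk _ (X i)) = Ideal.Quotient.mk _ (G i)
      exact hΦX i
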